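/- Let X be an n-dimensional real Banach space. Every symmetric ball-covering of S_X not containing the origin in any of its balls consists of at least 2n balls: if S_X ⊆ ⋃_{i=1}^r (B(xᵢ, rᵢ) ∪ B(−xᵢ, rᵢ)) with 0 < rᵢ ≤ ‖xᵢ‖ for all i, then r ≥ n. -/

import Mathlib

open Metric Filter Set Topology

/-- Every symmetric covering of the unit sphere of an n-dimensional real
Banach space by origin-avoiding open balls consists of at least 2n balls, i.e. uses at
least n symmetric pairs. -/
theorem stmt8 {X : Type*} [NormedAddCommGroup X] [NormedSpace ℝ X]
    [FiniteDimensional ℝ X] (n : ℕ) (hdim : Module.finrank ℝ X = n)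
    (k : ℕ) (x : Fin k → X) (r : Fin k → ℝ)
    (hr : ∀ i, 0 < r i ∧ r i ≤ ‖x i‖)
    (hcov : sphere (0 : X) 1 ⊆ ⋃ i, (ball (x i) (r i) ∪ ball (-(x i)) (r i))) :
    n ≤ k := by
  by_contra h
  push_neg at h
  have hx : ∀ i, x i ≠ 0 := by
    intro i h0
    have hi := hr i
    rw [h0, norm_zero] at hi
    linarith [hi.1, hi.2]
  choose f hf1 hf2 using fun i => exists_dual_vector ℝ (x i) (norm_ne_zero_iff.mpr (hx i))
  set φ : X →ₗ[ℝ] (Fin k → ℝ) :=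
    { toFun := fun y i => f i y
      map_add' := by intro a b; funext i; simp
      map_smul' := by intro c a; funext i; simp }
  have hninj : ¬ Function.Injective φ := by
    intro hinj
    have h1 := LinearMap.finrank_le_finrank_of_injective hinj
    rw [hdim] at h1
    simp [Module.finrank_pi] at h1
    omega
  rw [Function.not_injective_iff] at hninj
  obtain ⟨a, b, hab, hne⟩ := hninj
  set y := a - b with hy
  have hy0 : y ≠ 0 := sub_ne_zero_of_ne hne
  have hφy : ∀ i, f i y = 0 := by
    intro i
    have : φ y = 0 := by simp [hy, map_sub, hab]
    have := congrFun this i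
    simpa [φ] using this
  set u := ‖y‖⁻¹ • y with hu
  have hny : ‖y‖ ≠ 0 := norm_ne_zero_iff.mpr hy0
  have humem : u ∈ sphere (0 : X) 1 := by
    simp [hu, norm_smul, abs_of_nonneg (inv_nonneg.mpr (norm_nonneg y)),
      inv_mul_cancel₀ hny]
  obtain ⟨s, ⟨i, rfl⟩, hs⟩ := hcov humem
  have hfu : f i u = 0 := by
    simp [hu, map_smul, hφy i]
  have key : ∀ z : X, f i z = 0 → r i ≤ ‖x i - z‖ ∧ r i ≤ ‖-(x i) - z‖ := by
    intro z hz
    constructor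
    · calc r i ≤ ‖x i‖ := (hr i).2
        _ = f i (x i - z) := by rw [map_sub, hz, hf2 i, sub_zero]; norm_num
        _ ≤ ‖f i (x i - z)‖ := Real.le_norm_self _
        _ ≤ ‖f i‖ * ‖x i - z‖ := (f i).le_opNorm _
        _ = ‖x i - z‖ := by rw [hf1 i, one_mul]
    · calc r i ≤ ‖x i‖ := (hr i).2
        _ = f i (-(-(x i) - z)) := by
            rw [neg_sub, map_sub, hz, map_neg, hf2 i]; norm_num
        _ ≤ ‖f i (-(-(x i) - z))‖ := Real.le_norm_self _
        _ ≤ ‖f i‖ * ‖-(-(x i) - z)‖ := (f i).le_opNorm _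
        _ = ‖-(x i) - z‖ := by rw [hf1 i, one_mul, norm_neg]
  obtain ⟨h1, h2⟩ := key u hfu
  cases hs with
  | inl hb =>
    rw [mem_ball, dist_eq_norm] at hb
    rw [← norm_neg, neg_sub] at hb
    linarith
  | inr hb =>
    rw [mem_ball, dist_eq_norm] at hb
    rw [← norm_neg, neg_sub] at hb
    linarith
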